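/- Let C' be a finite subset of S^d, contained in an open hemisphere, and suppose that {x ∈ S^d : ⟨x,c⟩ > 0 for all c ∈ C'} ⊆ C(e_{d+1}, α) for some α ∈ (0, π/2). Then the cap C(e_{d+1}, π/2 - α) is contained in the spherical convex hull of C'. -/

import Mathlib

open Real Set
open scoped RealInnerProductSpace

noncomputable section

/-- Euclidean space `ℝ^n`. -/
abbrev E (n : ℕ) := EuclideanSpace ℝ (Fin n)

/-- The unit sphere `S^{n-1} ⊆ ℝ^n`. -/
def unitSphere (n : ℕ) : Set (E n) := Metric.sphere 0 1

/-- The spherical cap with center `v` and spherical radius `ρ`. -/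
def cap {n : ℕ} (v : E n) (ρ : ℝ) : Set (E n) := {u ∈ unitSphere n | Real.cos ρ ≤ ⟪u, v⟫}

/-- The last standard basis vector `e_{d+1}` of `ℝ^{d+1}`. -/
def eLast (d : ℕ) : E (d + 1) := EuclideanSpace.single (Fin.last d) 1

/-- Central projection from the origin onto the hyperplane `{x : x_{d+1} = 1}`,
identified with `ℝ^d` (with origin `e_{d+1}`). -/
def PN {d : ℕ} (x : E (d + 1)) : E d := WithLp.toLp 2 (fun i : Fin d => x i.castSucc / x (Fin.last d))

/-- Points of the shorter great-circle arc between unit vectors `u` and `v`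
(for `u`, `v` in an open hemisphere): normalized nonnegative combinations. -/
def arcPts {n : ℕ} (u v : E n) : Set (E n) :=
  {w | ∃ a b : ℝ, 0 ≤ a ∧ 0 ≤ b ∧ a • u + b • v ≠ 0 ∧ w = ‖a • u + b • v‖⁻¹ • (a • u + b • v)}

/-- A set `K ⊆ S^{n-1}` is spherically convex if it is the whole sphere, or it is
contained in an open hemisphere and contains the shorter arc between any two of its points. -/
def IsSphConvex {n : ℕ} (K : Set (E n)) : Prop :=
  K = unitSphere n ∨
    ((∃ v : E n, ∀ x ∈ K, 0 < ⟪x, v⟫) ∧ ∀ u ∈ K, ∀ w ∈ K, arcPts u w ⊆ K)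

/-- The spherical convex hull: the intersection of all spherically convex subsets
of the sphere containing `C`. -/
def sconv {n : ℕ} (C : Set (E n)) : Set (E n) :=
  ⋂₀ {K | IsSphConvex K ∧ K ⊆ unitSphere n ∧ C ⊆ K}

/-- The polar of a set `S ⊆ ℝ^n`. -/
def polar {n : ℕ} (S : Set (E n)) : Set (E n) := {x | ∀ s ∈ S, ⟪x, s⟫ ≤ 1}

end

/-! ### Auxiliary lemmas -/

/-- Pure arithmetic form of the spherical triangle inequality. -/
lemma aux_arith {s c a b i : ℝ} (hs : 0 < s) (hc : 0 < c) (hpyth : s ^ 2 + c ^ 2 = 1)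
    (h1 : c ≤ a) (ha1 : a ≤ 1) (h2 : s ≤ b) (hb1 : b ≤ 1)
    (hcs2 : (i - a * b) ^ 2 ≤ (1 - a ^ 2) * (1 - b ^ 2)) : 0 ≤ i := by
  have hapos : 0 < a := lt_of_lt_of_le hc h1
  have hbpos : 0 < b := lt_of_lt_of_le hs h2
  have h1a : 1 - a ^ 2 ≤ s ^ 2 := by nlinarith
  have h2b : 1 - b ^ 2 ≤ c ^ 2 := by nlinarith
  have h1a0 : 0 ≤ 1 - a ^ 2 := by nlinarith
  have h2b0 : 0 ≤ 1 - b ^ 2 := by nlinarith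
  have hprod : (i - a * b) ^ 2 ≤ (s * c) ^ 2 := by
    nlinarith [mul_le_mul h1a h2b h2b0 (sq_nonneg s)]
  have hab : s * c ≤ a * b := by nlinarith
  have hsq : (s * c) * (s * c) ≤ (a * b) * (a * b) :=
    mul_self_le_mul_self (by positivity) hab
  nlinarith [mul_pos hapos hbpos, sq_nonneg i]

/-- Spherical triangle inequality in Euclidean form: if `x` is within angle `α` of `e`
and `u` is within angle `π/2 - α` of `e`, then the angle between `x` and `u` is at
most `π/2`, i.e. `⟪x, u⟫ ≥ 0`. -/
lemma aux_triangle {n : ℕ} (e x u : E n) (he : ‖e‖ = 1) (hx : ‖x‖ = 1) (hu : ‖u‖ = 1)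
    {α : ℝ} (hα0 : 0 < α) (hα2 : α < Real.pi / 2)
    (h1 : Real.cos α ≤ ⟪x, e⟫) (h2 : Real.sin α ≤ ⟪u, e⟫) : 0 ≤ ⟪x, u⟫ := by
  have hπ := Real.pi_pos
  have hca : 0 < Real.cos α := Real.cos_pos_of_mem_Ioo ⟨by linarith, hα2⟩
  have hsa : 0 < Real.sin α := Real.sin_pos_of_pos_of_lt_pi hα0 (by linarith)
  have hpyth : Real.sin α ^ 2 + Real.cos α ^ 2 = 1 := Real.sin_sq_add_cos_sq α
  set a : ℝ := ⟪x, e⟫ with ha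
  set b : ℝ := ⟪u, e⟫ with hb
  have ha1 : a ≤ 1 := by
    have := real_inner_le_norm x e
    rw [hx, he] at this; simpa using this
  have hb1 : b ≤ 1 := by
    have := real_inner_le_norm u e
    rw [hu, he] at this; simpa using this
  have hee : ⟪e, e⟫ = 1 := by
    rw [real_inner_self_eq_norm_mul_norm, he]; ring
  have hinner : ⟪x - a • e, u - b • e⟫ = ⟪x, u⟫ - a * b := by
    rw [inner_sub_left, inner_sub_right, inner_sub_right, real_inner_smul_left,
      real_inner_smul_left, real_inner_smul_right, real_inner_smul_right, hee,
      ← ha, (by rw [real_inner_comm] : ⟪e, u⟫ = ⟪u, e⟫), ← hb]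
    ring
  have hnx : ‖x - a • e‖ ^ 2 = 1 - a ^ 2 := by
    rw [norm_sub_sq_real, real_inner_smul_right, norm_smul, hx, he]
    rw [← ha, Real.norm_eq_abs]
    have : |a| ^ 2 = a ^ 2 := sq_abs a
    nlinarith
  have hnu : ‖u - b • e‖ ^ 2 = 1 - b ^ 2 := by
    rw [norm_sub_sq_real, real_inner_smul_right, norm_smul, hu, he]
    rw [← hb, Real.norm_eq_abs]
    have : |b| ^ 2 = b ^ 2 := sq_abs b
    nlinarith
  have hcs : |⟪x - a • e, u - b • e⟫| ≤ ‖x - a • e‖ * ‖u - b • e‖ :=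
    abs_real_inner_le_norm _ _
  have hcs2 : (⟪x, u⟫ - a * b) ^ 2 ≤ (1 - a ^ 2) * (1 - b ^ 2) := by
    have h' : (⟪x - a • e, u - b • e⟫) ^ 2 ≤ (‖x - a • e‖ * ‖u - b • e‖) ^ 2 := by
      have := abs_nonneg (⟪x - a • e, u - b • e⟫)
      nlinarith [sq_abs (⟪x - a • e, u - b • e⟫)]
    rw [hinner] at h'
    calc (⟪x, u⟫ - a * b) ^ 2 ≤ (‖x - a • e‖ * ‖u - b • e‖) ^ 2 := h'
      _ = ‖x - a • e‖ ^ 2 * ‖u - b • e‖ ^ 2 := by ring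
      _ = (1 - a ^ 2) * (1 - b ^ 2) := by rw [hnx, hnu]
  exact aux_arith hsa hca hpyth h1 ha1 h2 hb1 hcs2

/-- Any normalized nonzero element of the `ℝ≥0`-span of a set `C` of unit vectors lies in
every arc-closed set `K` containing `C`. -/
lemma aux_mem_of_mem_span {n : ℕ} {C K : Set (E n)} (hCK : C ⊆ K) (hCs : C ⊆ unitSphere n)
    (harc : ∀ u ∈ K, ∀ w ∈ K, arcPts u w ⊆ K)
    {x : E n} (hx : x ∈ Submodule.span {c : ℝ // 0 ≤ c} C) (hx0 : x ≠ 0) :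
    ‖x‖⁻¹ • x ∈ K := by
  induction hx using Submodule.span_induction with
  | mem c hc =>
    have hc1 : ‖c‖ = 1 := by
      have := hCs hc
      rwa [unitSphere, mem_sphere_zero_iff_norm] at this
    rw [hc1, inv_one, one_smul]
    exact hCK hc
  | zero => exact absurd rfl hx0
  | add x y hxm hym ihx ihy =>
    by_cases hx' : x = 0
    · subst hx'; rw [zero_add] at hx0 ⊢; exact ihy hx0
    by_cases hy' : y = 0
    · subst hy'; rw [add_zero] at hx0 ⊢; exact ihx hx0
    have hnx : ‖x‖ ≠ 0 := norm_ne_zero_iff.mpr hx'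
    have hny : ‖y‖ ≠ 0 := norm_ne_zero_iff.mpr hy'
    refine harc _ (ihx hx') _ (ihy hy') ⟨‖x‖, ‖y‖, norm_nonneg _, norm_nonneg _, ?_, ?_⟩
    · rw [smul_inv_smul₀ hnx, smul_inv_smul₀ hny]; exact hx0
    · rw [smul_inv_smul₀ hnx, smul_inv_smul₀ hny]
  | smul a x hxm ihx =>
    have hax : a • x = (a : ℝ) • x := rfl
    rw [hax] at hx0 ⊢
    have ha0 : (a : ℝ) ≠ 0 := by
      intro hc; rw [hc, zero_smul] at hx0; exact hx0 rfl
    have hx' : x ≠ 0 := by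
      intro hc; rw [hc, smul_zero] at hx0; exact hx0 rfl
    have : ‖(a : ℝ) • x‖⁻¹ • (a : ℝ) • x = ‖x‖⁻¹ • x := by
      rw [norm_smul, Real.norm_eq_abs, abs_of_nonneg a.2, smul_smul]
      congr 1
      rw [mul_inv, mul_comm, ← mul_assoc, mul_inv_cancel₀ ha0, one_mul]
    rw [this]
    exact ihx hx'

/-- The `ℝ≥0`-span of a nonempty set coincides with the cone over its convex hull. -/
lemma aux_span_eq_cone {n : ℕ} (C : Set (E n)) (hne : C.Nonempty) :
    (Submodule.span {c : ℝ // 0 ≤ c} C : Set (E n)) =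
      {x : E n | ∃ t : ℝ, 0 ≤ t ∧ ∃ y ∈ convexHull ℝ C, x = t • y} := by
  obtain ⟨c₀, hc₀⟩ := hne
  apply Set.Subset.antisymm
  · intro x hx
    induction hx using Submodule.span_induction with
    | mem c hc => exact ⟨1, zero_le_one, c, subset_convexHull ℝ C hc, (one_smul ℝ c).symm⟩
    | zero => exact ⟨0, le_rfl, c₀, subset_convexHull ℝ C hc₀, (zero_smul ℝ c₀).symm⟩
    | add x y hxm hym ihx ihy =>
      obtain ⟨t₁, ht₁, y₁, hy₁, rfl⟩ := ihx
      obtain ⟨t₂, ht₂, y₂, hy₂, rfl⟩ := ihy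
      rcases eq_or_lt_of_le (by linarith : (0:ℝ) ≤ t₁ + t₂) with ht | ht
      · refine ⟨0, le_rfl, c₀, subset_convexHull ℝ C hc₀, ?_⟩
        have h1 : t₁ = 0 := by linarith
        have h2 : t₂ = 0 := by linarith
        rw [h1, h2, zero_smul, zero_smul, zero_smul, add_zero]
      · refine ⟨t₁ + t₂, ht.le, (t₁ / (t₁ + t₂)) • y₁ + (t₂ / (t₁ + t₂)) • y₂,
          (convex_convexHull ℝ C) hy₁ hy₂ (div_nonneg ht₁ ht.le) (div_nonneg ht₂ ht.le)
            (by field_simp), ?_⟩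
        have hne' : t₁ + t₂ ≠ 0 := ht.ne'
        rw [smul_add, smul_smul, smul_smul]
        rw [mul_div_cancel₀ _ hne', mul_div_cancel₀ _ hne']
    | smul a x hxm ihx =>
      obtain ⟨t, ht, y, hy, rfl⟩ := ihx
      exact ⟨(a : ℝ) * t, mul_nonneg a.2 ht, y, hy, smul_smul (a : ℝ) t y⟩
  · rintro x ⟨t, ht, y, hy, rfl⟩
    have hconv : Convex ℝ (Submodule.span {c : ℝ // 0 ≤ c} C : Set (E n)) :=
      ((Submodule.span {c : ℝ // 0 ≤ c} C : PointedCone ℝ (E n)) :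
        ConvexCone ℝ (E n)).convex
    have hhull : convexHull ℝ C ⊆ (Submodule.span {c : ℝ // 0 ≤ c} C : Set (E n)) :=
      convexHull_min Submodule.subset_span hconv
    have : (⟨t, ht⟩ : {c : ℝ // 0 ≤ c}) • y ∈ Submodule.span {c : ℝ // 0 ≤ c} C :=
      Submodule.smul_mem _ _ (hhull hy)
    exact this

/-- The cone over a compact convex set avoiding the origin is closed. -/
lemma aux_isClosed_cone {n : ℕ} (C : Set (E n)) (hfin : C.Finite) (hne : C.Nonempty)
    (h0 : (0 : E n) ∉ convexHull ℝ C) :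
    IsClosed {x : E n | ∃ t : ℝ, 0 ≤ t ∧ ∃ y ∈ convexHull ℝ C, x = t • y} := by
  set Kc : Set (E n) := convexHull ℝ C with hKc
  have hKcomp : IsCompact Kc := hfin.isCompact_convexHull ℝ
  have hKne : Kc.Nonempty := hne.mono (subset_convexHull ℝ C)
  obtain ⟨y₀, hy₀K, hy₀min⟩ := hKcomp.exists_isMinOn hKne continuous_norm.continuousOn
  set δ : ℝ := ‖y₀‖ with hδdef
  have hδ : 0 < δ := by
    rw [hδdef, norm_pos_iff]
    intro hc; rw [hc] at hy₀K; exact h0 hy₀K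
  apply isClosed_of_closure_subset
  intro u hu
  set T : ℝ := (‖u‖ + 1) / δ with hT
  have hT0 : 0 ≤ T := div_nonneg (by positivity) hδ.le
  set S : Set (E n) := (fun p : ℝ × E n => p.1 • p.2) '' (Set.Icc 0 T ×ˢ Kc) with hS
  have hScomp : IsCompact S := (isCompact_Icc.prod hKcomp).image continuous_smul
  have hSsub : S ⊆ {x : E n | ∃ t : ℝ, 0 ≤ t ∧ ∃ y ∈ Kc, x = t • y} := by
    rintro _ ⟨⟨t, y⟩, ⟨⟨ht0, _⟩, hy⟩, rfl⟩
    exact ⟨t, ht0, y, hy, rfl⟩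
  have huS : u ∈ closure S := by
    rw [Metric.mem_closure_iff] at hu ⊢
    intro ε hε
    obtain ⟨b, hb, hdist⟩ := hu (min ε 1) (lt_min hε one_pos)
    obtain ⟨t, ht0, y, hy, rfl⟩ := hb
    have hby : ‖t • y‖ ≤ ‖u‖ + 1 := by
      have h1 : ‖t • y‖ - ‖u‖ ≤ ‖t • y - u‖ := norm_sub_norm_le _ _
      have h2 : ‖t • y - u‖ = dist u (t • y) := by rw [dist_eq_norm, norm_sub_rev]
      have h3 : dist u (t • y) < 1 := lt_of_lt_of_le hdist (min_le_right _ _)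
      linarith
    have hyδ : δ ≤ ‖y‖ := hy₀min hy
    have htT : t ≤ T := by
      rw [hT, le_div_iff₀ hδ]
      have : t * δ ≤ t * ‖y‖ := mul_le_mul_of_nonneg_left hyδ ht0
      rw [norm_smul, Real.norm_eq_abs, abs_of_nonneg ht0] at hby
      linarith
    exact ⟨t • y, ⟨(t, y), ⟨⟨ht0, htT⟩, hy⟩, rfl⟩,
      lt_of_lt_of_le hdist (min_le_left _ _)⟩
  rw [hScomp.isClosed.closure_eq] at huS
  exact hSsub huS

/-- Spherical duality step: if the spherical polar of a finite `C'` (contained in an open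
hemisphere) is contained in the cap `C(e_{d+1}, α)`, then `C(e_{d+1}, π/2 - α) ⊆ sconv C'`. -/
theorem cap_subset_sconv_of_spolar (d : ℕ) (C' : Finset (E (d + 1)))
    (hC' : (C' : Set (E (d + 1))) ⊆ unitSphere (d + 1))
    (hhemi : ∃ v : E (d + 1), ∀ x ∈ C', 0 < ⟪x, v⟫)
    (α : ℝ) (hα : α ∈ Set.Ioo 0 (Real.pi / 2))
    (h : {x ∈ unitSphere (d + 1) | ∀ c ∈ C', 0 < ⟪x, c⟫} ⊆ cap (eLast d) α) :
    cap (eLast d) (Real.pi / 2 - α) ⊆ sconv (C' : Set (E (d + 1))) := by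
  obtain ⟨v, hv⟩ := hhemi
  obtain ⟨hα0, hα2⟩ := hα
  have hπ := Real.pi_pos
  have hcosα : 0 < Real.cos α := Real.cos_pos_of_mem_Ioo ⟨by linarith, hα2⟩
  have hsinα : 0 < Real.sin α := Real.sin_pos_of_pos_of_lt_pi hα0 (by linarith)
  have heN : ‖eLast d‖ = 1 := by
    rw [eLast, EuclideanSpace.norm_single]; simp
  -- C' is nonempty, else `-e ∈ cap e α`, a contradiction.
  rcases C'.eq_empty_or_nonempty with hCe | hCne
  · exfalso
    have hm : (-(eLast d)) ∈ {x ∈ unitSphere (d + 1) | ∀ c ∈ C', 0 < ⟪x, c⟫} := by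
      constructor
      · rw [unitSphere, mem_sphere_zero_iff_norm, norm_neg]; exact heN
      · intro c hc; rw [hCe] at hc; exact absurd hc (Finset.notMem_empty c)
    have hcap := (h hm).2
    rw [inner_neg_left, real_inner_self_eq_norm_mul_norm, heN] at hcap
    nlinarith
  intro u hu
  obtain ⟨huS, hue⟩ := hu
  have hu1 : ‖u‖ = 1 := by rwa [unitSphere, mem_sphere_zero_iff_norm] at huS
  rw [Real.cos_pi_div_two_sub] at hue
  -- Key claim: u lies in the nonnegative span of C'.
  have hspan : u ∈ Submodule.span {c : ℝ // 0 ≤ c} (C' : Set (E (d + 1))) := by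
    by_contra hus
    have h0hull : (0 : E (d + 1)) ∉ convexHull ℝ (C' : Set (E (d + 1))) := by
      intro h0
      have hsub : (C' : Set (E (d + 1))) ⊆ {x : E (d + 1) | 0 < ⟪x, v⟫} := fun x hx => hv x hx
      have hconv : Convex ℝ {x : E (d + 1) | 0 < ⟪x, v⟫} := by
        intro x hx y hy a b ha hb hab
        simp only [Set.mem_setOf_eq] at hx hy ⊢
        rw [inner_add_left, real_inner_smul_left, real_inner_smul_left]
        rcases eq_or_lt_of_le ha with ha' | ha'
        · rw [← ha', zero_mul, zero_add]
          have : b = 1 := by linarith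
          rw [this, one_mul]; exact hy
        · rcases eq_or_lt_of_le hb with hb' | hb'
          · rw [← hb', zero_mul, add_zero]
            have : a = 1 := by linarith
            rw [this, one_mul]; exact hx
          · positivity
      have := convexHull_min hsub hconv h0
      simp at this
    have hsetclosed :
        IsClosed ((Submodule.span {c : ℝ // 0 ≤ c} (C' : Set (E (d + 1)))) : Set (E (d + 1))) := by
      rw [aux_span_eq_cone (C' : Set (E (d + 1))) (Finset.coe_nonempty.mpr hCne)]
      exact aux_isClosed_cone _ (C'.finite_toSet) (Finset.coe_nonempty.mpr hCne) h0hull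
    obtain ⟨y, hy1, hy2'⟩ :=
      ProperCone.hyperplane_separation'
        (⟨Submodule.span {c : ℝ // 0 ≤ c} (C' : Set (E (d + 1))), hsetclosed⟩ :
            ProperCone ℝ (E (d + 1))) (x₀ := u) (by exact hus)
    have hy2 : ⟪y, u⟫ < 0 := by rw [real_inner_comm]; exact hy2'
    -- perturb y into the strict dual
    set t₀ : ℝ := (-⟪y, u⟫) / (2 * (|⟪v, u⟫| + 1)) with ht₀def
    have ht₀ : 0 < t₀ := by
      apply div_pos (by linarith) (by positivity)
    set w : E (d + 1) := y + t₀ • v with hwdef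
    have hwu : ⟪w, u⟫ < 0 := by
      rw [hwdef, inner_add_left, real_inner_smul_left]
      have habs : ⟪v, u⟫ ≤ |⟪v, u⟫| := le_abs_self _
      have hkey : t₀ * (|⟪v, u⟫| + 1) = -⟪y, u⟫ / 2 := by
        rw [ht₀def]; field_simp
      nlinarith [abs_nonneg ⟪v, u⟫]
    have hw0 : w ≠ 0 := by
      intro hc; rw [hc, inner_zero_left] at hwu; exact lt_irrefl 0 hwu
    have hnw : ‖w‖ ≠ 0 := norm_ne_zero_iff.mpr hw0
    have hnwpos : 0 < ‖w‖ := norm_pos_iff.mpr hw0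
    set x : E (d + 1) := ‖w‖⁻¹ • w with hxdef
    have hx1 : ‖x‖ = 1 := by
      rw [hxdef, norm_smul, Real.norm_eq_abs, abs_of_nonneg (inv_nonneg.mpr hnwpos.le)]
      field_simp
    have hxmem : x ∈ {z ∈ unitSphere (d + 1) | ∀ c ∈ C', 0 < ⟪z, c⟫} := by
      refine ⟨by rwa [unitSphere, mem_sphere_zero_iff_norm], fun c hc => ?_⟩
      rw [hxdef, real_inner_smul_left]
      have hyc : (0 : ℝ) ≤ ⟪y, c⟫ := by
        rw [real_inner_comm]
        exact hy1 c (Submodule.subset_span (by exact_mod_cast hc))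
      have hvc : (0 : ℝ) < ⟪v, c⟫ := by rw [real_inner_comm]; exact hv c hc
      have : (0 : ℝ) < ⟪w, c⟫ := by
        rw [hwdef, inner_add_left, real_inner_smul_left]
        nlinarith
      positivity
    have hxe : Real.cos α ≤ ⟪x, eLast d⟫ := (h hxmem).2
    have hxu : ⟪x, u⟫ < 0 := by
      rw [hxdef, real_inner_smul_left]
      have : (0:ℝ) < ‖w‖⁻¹ := by positivity
      nlinarith
    have := aux_triangle (eLast d) x u heN hx1 hu1 hα0 hα2 hxe hue
    linarith
  -- Now conclude: u belongs to every admissible K.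
  rw [sconv, Set.mem_sInter]
  rintro K ⟨hKconv, hKsub, hKC⟩
  rcases hKconv with hKeq | ⟨_, harc⟩
  · rw [hKeq, unitSphere, mem_sphere_zero_iff_norm]; exact hu1
  · have := aux_mem_of_mem_span hKC (hC') harc hspan
      (by rw [← norm_pos_iff, hu1]; exact one_pos)
    rwa [hu1, inv_one, one_smul] at this
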